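/- Fix $\gamma\in(0,1)$ and $\zeta>0$ with $1-\gamma>\tfrac43\zeta$. Suppose $\pi^\star_n(t)\le\alpha^\star_n$ for all $t$, $\pi^\star_n(t)\le C(\alpha^\star_n)^2/\alpha^\star_{\ell(t)}$ for $t\ge\varepsilon_n$, $\ell(t)=t^{-4/3+o(1)}$ as $t\to0$, $\varepsilon_n=n^{-3/4+o(1)}$, and $\alpha^\star_m=m^{-\zeta+o(1)}$. Then $\sup_n\int_0^1 t^{-\gamma}\,\pi^\star_n(t)/(\alpha^\star_n)^2\,dt<\infty$. -/

import Mathlib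

open MeasureTheory

set_option maxHeartbeats 1000000


/-- second-moment integral bound for exceptional times: if
`1 - γ > (4/3) ζ`, `π⋆_n(t) ≤ α⋆_n`, `π⋆_n(t) ≤ C (α⋆_n)²/α⋆_{ℓ(t)}` for `t ≥ ε_n`,
`ℓ(t) = t^{-4/3+o(1)}`, `ε_n = n^{-3/4+o(1)}` and `α⋆_m = m^{-ζ+o(1)}`, then
`sup_n ∫_0^1 t^{-γ} π⋆_n(t)/(α⋆_n)² dt < ∞`. -/
theorem second_moment_integral_bound
    (γ ζ : ℝ) (hγ0 : 0 < γ) (hγ1 : γ < 1) (hζ : 0 < ζ)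
    (hγζ : 1 - γ > 4 / 3 * ζ)
    (πs : ℕ → ℝ → ℝ) (αs : ℕ → ℝ) (ℓ : ℝ → ℕ) (ε : ℕ → ℝ)
    (hα : ∀ n, 1 ≤ n → 0 < αs n)
    (hε : ∀ n, 1 ≤ n → 0 < ε n ∧ ε n ≤ 1)
    (hπ : ∀ n, 1 ≤ n → ∀ t ∈ Set.Icc (0:ℝ) 1, 0 ≤ πs n t ∧ πs n t ≤ αs n)
    (C : ℝ) (hC : 0 < C)
    (hπsens : ∀ n, 1 ≤ n → ∀ t : ℝ, ε n ≤ t → t ≤ 1 →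
      πs n t ≤ C * (αs n) ^ 2 / αs (ℓ t))
    (hℓ : ∀ δ > (0:ℝ), ∃ K ≥ (1:ℝ), ∀ t : ℝ, 0 < t → t ≤ 1 →
      K⁻¹ * t ^ (-(4/3 : ℝ) + δ) ≤ (ℓ t : ℝ) ∧ (ℓ t : ℝ) ≤ K * t ^ (-(4/3 : ℝ) - δ))
    (hεasym : ∀ δ > (0:ℝ), ∃ K ≥ (1:ℝ), ∀ n : ℕ, 1 ≤ n →
      K⁻¹ * (n:ℝ) ^ (-(3/4 : ℝ) - δ) ≤ ε n ∧ ε n ≤ K * (n:ℝ) ^ (-(3/4 : ℝ) + δ))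
    (hαasym : ∀ δ > (0:ℝ), ∃ K ≥ (1:ℝ), ∀ m : ℕ, 1 ≤ m →
      K⁻¹ * (m:ℝ) ^ (-ζ - δ) ≤ αs m ∧ αs m ≤ K * (m:ℝ) ^ (-ζ + δ)) :
    ∃ M : ℝ, ∀ n : ℕ, 1 ≤ n →
      (∫ t in (0:ℝ)..1, t ^ (-γ) * πs n t / (αs n) ^ 2) ≤ M := by
  -- margin `s` and perturbation `d`
  set s : ℝ := (1 - γ) - 4 / 3 * ζ with hs_def
  have hs : 0 < s := by simp only [hs_def]; linarith
  set d : ℝ := s / (4 * (ζ + 1)) with hd_def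
  have hζ1 : (0:ℝ) < ζ + 1 := by linarith
  have hd : 0 < d := by positivity
  have h4d : d * (4 * (ζ + 1)) = s := by
    rw [hd_def]; field_simp
  have hs1 : s < 1 := by simp only [hs_def]; linarith
  have h4d' : s = 4 * (d * ζ) + 4 * d := by rw [← h4d]; ring
  clear_value s d
  have hd_le : d ≤ s / 4 := by linarith [mul_nonneg hd.le hζ.le]
  have hd1 : d ≤ 1 := by linarith
  obtain ⟨Kℓ, hKℓ1, hKℓ⟩ := hℓ d hd
  obtain ⟨Kε, hKε1, hKε⟩ := hεasym d hd
  obtain ⟨Kα, hKα1, hKα⟩ := hαasym d hd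
  have hKℓ0 : (0:ℝ) < Kℓ := lt_of_lt_of_le one_pos hKℓ1
  have hKε0 : (0:ℝ) < Kε := lt_of_lt_of_le one_pos hKε1
  have hKα0 : (0:ℝ) < Kα := lt_of_lt_of_le one_pos hKα1
  -- the exponent for the second piece
  set e : ℝ := (4/3 + d) * (ζ + d) with he_def
  have he_pos : 0 < e := by positivity
  have hγe : γ + e < 1 := by
    have hdd : d * d ≤ d := by nlinarith
    have : e < 4 / 3 * ζ + s := by
      simp only [he_def]; nlinarith [h4d, hdd, mul_nonneg hd.le hζ.le]
    simp only [hs_def] at this; linarith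
  -- exponent for the first piece
  have hp1 : (ζ + d) + (-(3/4 : ℝ) + d) * (1 - γ) ≤ 0 := by
    have hdγ : 0 ≤ d * γ := mul_nonneg hd.le hγ0.le
    simp only [hs_def] at hd_le
    nlinarith [hd_le, hs, hdγ]
  -- constants
  set A : ℝ := Kα * Kε ^ (1 - γ) / (1 - γ) with hA_def
  set B : ℝ := C * Kα * Kℓ ^ (ζ + d) / (1 - (γ + e)) with hB_def
  have hA0 : 0 < A := by
    have : (0:ℝ) < Kε ^ (1 - γ) := Real.rpow_pos_of_pos hKε0 _
    rw [hA_def]; exact div_pos (by positivity) (by linarith)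
  have hB0 : 0 < B := by
    have : (0:ℝ) < Kℓ ^ (ζ + d) := Real.rpow_pos_of_pos hKℓ0 _
    have h1 : (0:ℝ) < 1 - (γ + e) := by linarith
    rw [hB_def]; exact div_pos (by positivity) h1
  refine ⟨A + B, fun n hn => ?_⟩
  have hαn := hα n hn
  obtain ⟨hεn0, hεn1⟩ := hε n hn
  have hn1 : (1:ℝ) ≤ (n:ℝ) := by exact_mod_cast hn
  by_cases hint : IntervalIntegrable (fun t => t ^ (-γ) * πs n t / (αs n) ^ 2) volume 0 1
  · -- split the integral at ε n
    have hsub1 : IntervalIntegrable (fun t => t ^ (-γ) * πs n t / (αs n) ^ 2) volume 0 (ε n) :=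
      hint.mono_set (Set.uIcc_subset_uIcc (by simp) (by
        rw [Set.uIcc_of_le (by norm_num : (0:ℝ) ≤ 1)]; exact ⟨hεn0.le, hεn1⟩))
    have hsub2 : IntervalIntegrable (fun t => t ^ (-γ) * πs n t / (αs n) ^ 2) volume (ε n) 1 :=
      hint.mono_set (Set.uIcc_subset_uIcc (by
        rw [Set.uIcc_of_le (by norm_num : (0:ℝ) ≤ 1)]; exact ⟨hεn0.le, hεn1⟩) (by simp))
    rw [← intervalIntegral.integral_add_adjacent_intervals hsub1 hsub2]
    have hrpow_int : ∀ r : ℝ, -1 < r → ∀ a b : ℝ,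
        IntervalIntegrable (fun t : ℝ => t ^ r) volume a b := fun r hr a b =>
      intervalIntegral.intervalIntegrable_rpow' hr
    -- First piece
    have hI1 : (∫ t in (0:ℝ)..(ε n), t ^ (-γ) * πs n t / (αs n) ^ 2) ≤ A := by
      have hmono : (∫ t in (0:ℝ)..(ε n), t ^ (-γ) * πs n t / (αs n) ^ 2) ≤
          ∫ t in (0:ℝ)..(ε n), t ^ (-γ) * αs n / (αs n) ^ 2 := by
        apply intervalIntegral.integral_mono_on hεn0.le hsub1
        · exact ((hrpow_int (-γ) (by linarith) 0 (ε n)).mul_const _).div_const _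
        · intro t ht
          have ht01 : t ∈ Set.Icc (0:ℝ) 1 := ⟨ht.1, le_trans ht.2 hεn1⟩
          have hπt := hπ n hn t ht01
          gcongr
          · exact Real.rpow_nonneg ht.1 _
          · exact hπt.2
      have hcomp : (∫ t in (0:ℝ)..(ε n), t ^ (-γ) * αs n / (αs n) ^ 2) =
          (ε n) ^ (1 - γ) / (1 - γ) / αs n := by
        rw [intervalIntegral.integral_div, intervalIntegral.integral_mul_const,
          integral_rpow (Or.inl (by linarith))]
        rw [Real.zero_rpow (ne_of_gt (by linarith) : -γ + 1 ≠ 0)]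
        have h2 : -γ + 1 = 1 - γ := by ring
        rw [h2, sub_zero]
        have h3 : αs n / αs n ^ 2 = (αs n)⁻¹ := by
          rw [pow_two, div_mul_eq_div_div, div_self hαn.ne', one_div]
        rw [mul_div_assoc, h3]
        ring
      rw [hcomp] at hmono
      refine le_trans hmono ?_
      -- now the numeric bound
      have hαinv : (αs n)⁻¹ ≤ Kα * (n:ℝ) ^ (ζ + d) := by
        have hlow := (hKα n hn).1
        have hpos : (0:ℝ) < Kα⁻¹ * (n:ℝ) ^ (-ζ - d) := by
          have := Real.rpow_pos_of_pos (lt_of_lt_of_le one_pos hn1) (-ζ - d)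
          positivity
        calc (αs n)⁻¹ ≤ (Kα⁻¹ * (n:ℝ) ^ (-ζ - d))⁻¹ := by
              exact inv_anti₀ hpos hlow
          _ = Kα * ((n:ℝ) ^ (-ζ - d))⁻¹ := by rw [mul_inv, inv_inv]
          _ = Kα * (n:ℝ) ^ (ζ + d) := by
              rw [← Real.rpow_neg (by positivity)]; ring_nf
      have hεb : (ε n) ^ (1 - γ) ≤ Kε ^ (1 - γ) * (n:ℝ) ^ ((-(3/4 : ℝ) + d) * (1 - γ)) := by
        calc (ε n) ^ (1 - γ) ≤ (Kε * (n:ℝ) ^ (-(3/4 : ℝ) + d)) ^ (1 - γ) :=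
              Real.rpow_le_rpow hεn0.le (hKε n hn).2 (by linarith)
          _ = Kε ^ (1 - γ) * (n:ℝ) ^ ((-(3/4 : ℝ) + d) * (1 - γ)) := by
              rw [Real.mul_rpow hKε0.le (by positivity), ← Real.rpow_mul (by positivity)]
      have hcombine : (ε n) ^ (1 - γ) / (1 - γ) / αs n =
          (ε n) ^ (1 - γ) * (αs n)⁻¹ / (1 - γ) := by ring
      rw [hcombine]
      have hnp : (n:ℝ) ^ ((-(3/4 : ℝ) + d) * (1 - γ)) * ((n:ℝ) ^ (ζ + d)) =
          (n:ℝ) ^ ((ζ + d) + (-(3/4 : ℝ) + d) * (1 - γ)) := by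
        rw [← Real.rpow_add (lt_of_lt_of_le one_pos hn1)]; ring_nf
      have hfin : (ε n) ^ (1 - γ) * (αs n)⁻¹ ≤ Kα * Kε ^ (1 - γ) := by
        calc (ε n) ^ (1 - γ) * (αs n)⁻¹
            ≤ (Kε ^ (1 - γ) * (n:ℝ) ^ ((-(3/4 : ℝ) + d) * (1 - γ))) * (Kα * (n:ℝ) ^ (ζ + d)) := by
              apply mul_le_mul hεb hαinv (inv_nonneg.mpr hαn.le) (by positivity)
          _ = Kα * Kε ^ (1 - γ) * ((n:ℝ) ^ ((-(3/4 : ℝ) + d) * (1 - γ)) * (n:ℝ) ^ (ζ + d)) := by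
              ring
          _ ≤ Kα * Kε ^ (1 - γ) * 1 :=
              mul_le_mul_of_nonneg_left
                (by rw [hnp]; exact Real.rpow_le_one_of_one_le_of_nonpos hn1 hp1)
                (by positivity)
          _ = Kα * Kε ^ (1 - γ) := by ring
      rw [hA_def]
      exact (div_le_div_iff_of_pos_right (by linarith : (0:ℝ) < 1 - γ)).mpr hfin
    -- Second piece
    have hI2 : (∫ t in (ε n)..1, t ^ (-γ) * πs n t / (αs n) ^ 2) ≤ B := by
      set CK : ℝ := C * Kα * Kℓ ^ (ζ + d) with hCK_def
      have hCK0 : 0 < CK := by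
        have : (0:ℝ) < Kℓ ^ (ζ + d) := Real.rpow_pos_of_pos hKℓ0 _
        rw [hCK_def]; positivity
      have hmono : (∫ t in (ε n)..1, t ^ (-γ) * πs n t / (αs n) ^ 2) ≤
          ∫ t in (ε n)..1, CK * t ^ (-(γ + e)) := by
        apply intervalIntegral.integral_mono_on hεn1 hsub2
        · exact (hrpow_int (-(γ + e)) (by linarith) (ε n) 1).const_mul _
        · intro t ht
          have ht0 : 0 < t := lt_of_lt_of_le hεn0 ht.1
          have hℓt := hKℓ t ht0 ht.2
          have hℓpos : (0:ℝ) < (ℓ t : ℝ) := by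
            refine lt_of_lt_of_le ?_ hℓt.1
            have := Real.rpow_pos_of_pos ht0 (-(4/3 : ℝ) + d)
            positivity
          have hℓ1 : 1 ≤ ℓ t := by
            have : 0 < ℓ t := by exact_mod_cast hℓpos
            omega
          have hαℓ : 0 < αs (ℓ t) := hα _ hℓ1
          have hαℓinv : (αs (ℓ t))⁻¹ ≤ Kα * (ℓ t : ℝ) ^ (ζ + d) := by
            have hlow := (hKα (ℓ t) hℓ1).1
            have hpos : (0:ℝ) < Kα⁻¹ * (ℓ t : ℝ) ^ (-ζ - d) := by
              have := Real.rpow_pos_of_pos hℓpos (-ζ - d)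
              positivity
            calc (αs (ℓ t))⁻¹ ≤ (Kα⁻¹ * (ℓ t : ℝ) ^ (-ζ - d))⁻¹ := inv_anti₀ hpos hlow
              _ = Kα * ((ℓ t : ℝ) ^ (-ζ - d))⁻¹ := by rw [mul_inv, inv_inv]
              _ = Kα * (ℓ t : ℝ) ^ (ζ + d) := by
                  rw [← Real.rpow_neg hℓpos.le]; ring_nf
          have hℓb : (ℓ t : ℝ) ^ (ζ + d) ≤ Kℓ ^ (ζ + d) * t ^ (-e) := by
            calc (ℓ t : ℝ) ^ (ζ + d) ≤ (Kℓ * t ^ (-(4/3 : ℝ) - d)) ^ (ζ + d) :=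
                  Real.rpow_le_rpow hℓpos.le hℓt.2 (by positivity)
              _ = Kℓ ^ (ζ + d) * t ^ ((-(4/3 : ℝ) - d) * (ζ + d)) := by
                  rw [Real.mul_rpow hKℓ0.le (by positivity), ← Real.rpow_mul ht0.le]
              _ = Kℓ ^ (ζ + d) * t ^ (-e) := by
                  congr 1
                  rw [he_def]
                  ring_nf
          calc t ^ (-γ) * πs n t / (αs n) ^ 2
              ≤ t ^ (-γ) * (C * (αs n) ^ 2 / αs (ℓ t)) / (αs n) ^ 2 := by
                gcongr <;>
                  first
                    | exact Real.rpow_nonneg ht0.le _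
                    | exact hπsens n hn t ht.1 ht.2
            _ = t ^ (-γ) * C * (αs (ℓ t))⁻¹ := by
                field_simp
            _ ≤ t ^ (-γ) * C * (Kα * (Kℓ ^ (ζ + d) * t ^ (-e))) :=
                mul_le_mul_of_nonneg_left
                  (le_trans hαℓinv (mul_le_mul_of_nonneg_left hℓb hKα0.le))
                  (mul_nonneg (Real.rpow_nonneg ht0.le _) hC.le)
            _ = CK * (t ^ (-γ) * t ^ (-e)) := by rw [hCK_def]; ring
            _ = CK * t ^ (-(γ + e)) := by
                rw [← Real.rpow_add ht0]
                have h4 : -γ + -e = -(γ + e) := by ring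
                rw [h4]
      refine le_trans hmono ?_
      rw [intervalIntegral.integral_const_mul, integral_rpow (Or.inl (by linarith))]
      have h1 : -(γ + e) + 1 = 1 - (γ + e) := by ring
      rw [h1, Real.one_rpow]
      have hεe : 0 ≤ (ε n) ^ (1 - (γ + e)) := Real.rpow_nonneg hεn0.le _
      have hz : (0:ℝ) < 1 - (γ + e) := by linarith
      calc CK * ((1 - (ε n) ^ (1 - (γ + e))) / (1 - (γ + e)))
          ≤ CK * (1 / (1 - (γ + e))) :=
            mul_le_mul_of_nonneg_left
              ((div_le_div_iff_of_pos_right hz).mpr (by linarith)) hCK0.le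
        _ = B := by rw [hB_def, hCK_def]; ring
    linarith
  · rw [intervalIntegral.integral_undef hint]
    positivity
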